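/- In a tree with at least one heavy vertex, the heavy vertices induce a connected subgraph. -/

import Mathlib

/-- `Gnot G v u` is the set `G_{v↛u}` of vertices `w` such that `u` does not lie on the
unique path from `v` to `w` (expressed via distances). -/
noncomputable def Gnot {V : Type*} [Fintype V] [DecidableEq V]
    (G : SimpleGraph V) (v u : V) : Finset V :=
  Finset.univ \ Finset.univ.filter (fun w => G.dist v u + G.dist u w = G.dist v w)

/-- A vertex is light (w.r.t. threshold `k`) if it is light against some neighbor,
i.e. `|G_{v↛u}| ≤ k` for some neighbor `u`; heavy means not light. -/
def Light {V : Type*} [Fintype V] [DecidableEq V]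
    (G : SimpleGraph V) (k : ℕ) (v : V) : Prop :=
  ∃ u : V, G.Adj v u ∧ (Gnot G v u).card ≤ k

open SimpleGraph Walk

section Aux

variable {V : Type*} [Fintype V] [DecidableEq V] {G : SimpleGraph V}

/-- In a tree, every path realizes the distance. -/
lemma tree_path_length (hG : G.IsTree) {a b : V} (p : G.Walk a b) (hp : p.IsPath) :
    p.length = G.dist a b := by
  obtain ⟨q, hq⟩ := hG.isConnected.exists_walk_length_eq_dist a b
  have hlen : q.bypass.length = G.dist a b :=
    le_antisymm (hq ▸ q.length_bypass_le) (SimpleGraph.dist_le q.bypass)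
  have hpq : (⟨p, hp⟩ : G.Path a b) = ⟨q.bypass, q.bypass_isPath⟩ :=
    hG.IsAcyclic.path_unique _ _
  have hval : p = q.bypass := congrArg Subtype.val hpq
  rw [hval, hlen]

/-- Distances add along vertices of a path in a tree. -/
lemma tree_dist_add (hG : G.IsTree) {a b y : V} (p : G.Walk a b) (hp : p.IsPath)
    (hy : y ∈ p.support) : G.dist a y + G.dist y b = G.dist a b := by
  have h1 := tree_path_length hG (p.takeUntil y hy) (hp.takeUntil hy)
  have h2 := tree_path_length hG (p.dropUntil y hy) (hp.dropUntil hy)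
  have h3 : (p.takeUntil y hy).length + (p.dropUntil y hy).length = p.length := by
    rw [← Walk.length_append, p.take_spec hy]
  rw [← tree_path_length hG p hp, ← h1, ← h2, h3]

/-- In a tree, distances from any point to two adjacent vertices differ by exactly one. -/
lemma adj_dist_cases (hG : G.IsTree) {u v : V} (huv : G.Adj u v) (x : V) :
    G.dist x v = G.dist x u + 1 ∨ G.dist x u = G.dist x v + 1 := by
  obtain ⟨p, hp⟩ := hG.isConnected.exists_walk_length_eq_dist x u
  have hpath : p.IsPath := p.isPath_of_length_eq_dist hp
  have huv1 : G.dist v u = 1 := SimpleGraph.dist_eq_one_iff_adj.mpr huv.symm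
  by_cases hv : v ∈ p.support
  · right
    have h := tree_dist_add hG p hpath hv
    rw [huv1] at h
    omega
  · left
    have hcat : (p.concat huv).IsPath := by
      rw [Walk.isPath_def, Walk.support_concat]
      simp only [List.concat_eq_append, List.nodup_append, List.nodup_cons, List.nodup_nil,
        List.not_mem_nil, not_false_iff, and_true, List.disjoint_singleton]
      exact ⟨hpath.support_nodup, trivial, fun a ha b hb hab => by simp at hb; subst hb; subst hab; exact hv ha⟩
    have h := tree_path_length hG (p.concat huv) hcat
    rw [Walk.length_concat, hp] at h
    omega

/-- Betweenness transitivity in a tree: if `v` is between `x` and `u` (adjacent to `u`),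
and `u` is between `v` and `w`, then distances add up. -/
lemma tree_between_trans (hG : G.IsTree) {v u : V} (huv : G.Adj v u) {x w : V}
    (hx : G.dist x u = G.dist x v + 1) (hw : G.dist v w = G.dist u w + 1) :
    G.dist x w = G.dist x v + 1 + G.dist u w := by
  have huv1 : G.dist u v = 1 := SimpleGraph.dist_eq_one_iff_adj.mpr huv.symm
  obtain ⟨p, hp⟩ := hG.isConnected.exists_walk_length_eq_dist x v
  have hppath : p.IsPath := p.isPath_of_length_eq_dist hp
  obtain ⟨q, hq⟩ := hG.isConnected.exists_walk_length_eq_dist u w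
  have hqpath : q.IsPath := q.isPath_of_length_eq_dist hq
  have hup : u ∉ p.support := by
    intro h
    have h1 := tree_dist_add hG p hppath h
    rw [huv1] at h1
    omega
  have hvq : v ∉ q.support := by
    intro h
    have h1 := tree_dist_add hG q hqpath h
    rw [show G.dist v w = G.dist u w + 1 from hw] at h1
    have : G.dist u v = 1 := huv1
    omega
  have hdisj : ∀ y ∈ p.support, y ∉ q.support := by
    intro y hyp hyq
    have h1 := tree_dist_add hG p hppath hyp
    have h2 := tree_dist_add hG q hqpath hyq
    have t1 : G.dist x u ≤ G.dist x y + G.dist y u := hG.isConnected.dist_triangle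
    have t2 : G.dist v w ≤ G.dist v y + G.dist y w := hG.isConnected.dist_triangle
    have c1 : G.dist y u = G.dist u y := SimpleGraph.dist_comm ..
    have c2 : G.dist v y = G.dist y v := SimpleGraph.dist_comm ..
    omega
  have hrpath : (p.append (Walk.cons huv q)).IsPath := by
    rw [Walk.isPath_def, Walk.support_append, Walk.support_cons, List.tail_cons,
      List.nodup_append]
    exact ⟨hppath.support_nodup, hqpath.support_nodup, fun a ha b hb hab => by subst hab; exact hdisj a ha hb⟩
  have h := tree_path_length hG _ hrpath
  rw [Walk.length_append, Walk.length_cons, hp, hq] at h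
  omega

lemma mem_Gnot_iff (hG : G.IsTree) {v u : V} (huv : G.Adj v u) (w : V) :
    w ∈ Gnot G v u ↔ G.dist u w = G.dist v w + 1 := by
  have h1 : G.dist v u = 1 := SimpleGraph.dist_eq_one_iff_adj.mpr huv
  have hdich := adj_dist_cases hG huv w
  have c1 : G.dist w v = G.dist v w := SimpleGraph.dist_comm ..
  have c2 : G.dist w u = G.dist u w := SimpleGraph.dist_comm ..
  simp only [Gnot, Finset.mem_sdiff, Finset.mem_univ, Finset.mem_filter, true_and,
    not_and, h1]
  constructor
  · intro h; omega
  · intro h; omega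

/-- Lightness spreads away: if `v` is light against `u`, then every `x ≠ v` on the side
of `v` (i.e. with `v` between `x` and `u`) is light. -/
lemma light_spread (hG : G.IsTree) {k : ℕ} {v u : V} (huv : G.Adj v u)
    (hcard : (Gnot G v u).card ≤ k) {x : V} (hxv : x ≠ v)
    (hx : G.dist x u = G.dist x v + 1) : Light G k x := by
  have hdvx : G.dist x v ≠ 0 := fun h0 =>
    hxv ((hG.isConnected.dist_eq_zero_iff).mp h0)
  obtain ⟨p, hp⟩ := hG.isConnected.exists_walk_length_eq_dist x v
  cases p with
  | nil => exact absurd rfl hxv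
  | @cons _ n _ hxn q =>
    have hppath : (Walk.cons hxn q).IsPath := (Walk.cons hxn q).isPath_of_length_eq_dist hp
    have hqlen : q.length = G.dist n v := tree_path_length hG q hppath.of_cons
    rw [Walk.length_cons] at hp
    have hnv : G.dist n v + 1 = G.dist x v := by omega
    refine ⟨n, hxn, le_trans (Finset.card_le_card ?_) hcard⟩
    intro w hwmem
    rw [mem_Gnot_iff hG hxn w] at hwmem
    rw [mem_Gnot_iff hG huv w]
    by_contra hcon
    have hdich := adj_dist_cases hG huv w
    have c1 : G.dist w v = G.dist v w := SimpleGraph.dist_comm ..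
    have c2 : G.dist w u = G.dist u w := SimpleGraph.dist_comm ..
    have hvw : G.dist v w = G.dist u w + 1 := by omega
    have htr := tree_between_trans hG huv hx hvw
    have t1 : G.dist n w ≤ G.dist n v + G.dist v w := hG.isConnected.dist_triangle
    omega

lemma heavy_reach (hG : G.IsTree) (k : ℕ) :
    ∀ d : ℕ, ∀ h₁ h₂ : V, ∀ hh₁ : ¬ Light G k h₁, ∀ hh₂ : ¬ Light G k h₂,
      G.dist h₁ h₂ = d →
      (G.induce {v : V | ¬ Light G k v}).Reachable ⟨h₁, hh₁⟩ ⟨h₂, hh₂⟩ := by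
  intro d
  induction d with
  | zero =>
    intro h₁ h₂ hh₁ hh₂ hd
    have : h₁ = h₂ := (hG.isConnected.dist_eq_zero_iff).mp hd
    subst this
    rfl
  | succ d ih =>
    intro h₁ h₂ hh₁ hh₂ hd
    obtain ⟨p, hp⟩ := hG.isConnected.exists_walk_length_eq_dist h₁ h₂
    cases p with
    | nil => simp at hd
    | @cons _ y _ hxy q =>
      have hppath : (Walk.cons hxy q).IsPath := (Walk.cons hxy q).isPath_of_length_eq_dist hp
      have hqlen : q.length = G.dist y h₂ := tree_path_length hG q hppath.of_cons
      rw [Walk.length_cons, hd] at hp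
      have hdy : G.dist y h₂ = d := by omega
      have hy : ¬ Light G k y := by
        by_cases hyh₂ : h₂ = y
        · rw [← hyh₂]; exact hh₂
        intro hlight
        obtain ⟨u, hyu, hcard⟩ := hlight
        have h₁y : G.dist h₁ y = 1 := SimpleGraph.dist_eq_one_iff_adj.mpr hxy
        have hne₁ : h₁ ≠ y := hxy.ne
        -- u must equal h₁
        have hu1 : G.dist h₁ u = 0 := by
          rcases adj_dist_cases hG hyu h₁ with h | h
          · exact absurd (light_spread hG hyu hcard hne₁ h) hh₁
          · omega
        have hu : u = h₁ := ((hG.isConnected.dist_eq_zero_iff).mp hu1).symm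
        -- now use h₂
        have h₂side : G.dist h₂ y = G.dist h₂ u + 1 := by
          rcases adj_dist_cases hG hyu h₂ with h | h
          · exact absurd (light_spread hG hyu hcard hyh₂ h) hh₂
          · exact h
        rw [hu] at h₂side
        have c1 : G.dist h₂ y = G.dist y h₂ := SimpleGraph.dist_comm ..
        have c2 : G.dist h₂ h₁ = G.dist h₁ h₂ := SimpleGraph.dist_comm ..
        omega
      have hadj : (G.induce {v : V | ¬ Light G k v}).Adj ⟨h₁, hh₁⟩ ⟨y, hy⟩ := by
        simpa using hxy
      exact hadj.reachable.trans (ih y h₂ hy hh₂ hdy)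

end Aux

/-- In a tree with at least one heavy vertex, the heavy vertices induce a connected
subgraph. -/
theorem stmt_6 {V : Type*} [Fintype V] [DecidableEq V]
    (G : SimpleGraph V) (hG : G.IsTree) (k : ℕ) (hk : 1 ≤ k)
    (hheavy : ∃ h : V, ¬ Light G k h) :
    (G.induce {v : V | ¬ Light G k v}).Connected := by
  obtain ⟨h, hh⟩ := hheavy
  have hne : Nonempty {v : V | ¬ Light G k v} := ⟨⟨h, hh⟩⟩
  refine ⟨fun a b => ?_⟩
  obtain ⟨a, ha⟩ := a
  obtain ⟨b, hb⟩ := b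
  exact heavy_reach hG k (G.dist a b) a b ha hb rfl
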